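/- arXiv:2507.20386 — 2 statements merged into one kernel-verified Lean document; each statement's English description precedes it below -/
import Mathlib

section
/- Fix μ > 0, y^a ∈ ℝ^{m_a}, y^b ∈ ℝ^{m_b}, V ∈ ℝ^{k×n} and an index i ∈ {1,…,n}. For u ∈ ℝ^k let V(u) denote the matrix obtained from V by replacing its i-th column with u. Then the function u ↦ L(V(u), y^a, y^b; μ) from ℝ^k to ℝ is differentiable at every u, with gradient 2·V(u)·( C_{(i)} − Σ_{j=1}^{m_a} [ y^a_j + μ(a_j − ⟨A_j, V(u)ᵀV(u)⟩) ]·(A_j)_{(i)} − Σ_{j=1}^{m_b} max{ y^b_j + μ(b_j − ⟨B_j, V(u)ᵀV(u)⟩), 0 }·(B_j)_{(i)} ), where M_{(i)} denotes the i-th column of a matrix M. -/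
open Matrix Filter

/-- The trace (Frobenius) inner product `⟨M, N⟩ = trace (Nᵀ M)` on `k × n` real matrices. -/
noncomputable def tip {k n : ℕ} (M N : Matrix (Fin k) (Fin n) ℝ) : ℝ :=
  (Nᵀ * M).trace

/-- The continuous linear functional `w ↦ ⟨g, w⟩ = Σ_l g_l w_l` on `ℝ^k`. -/
noncomputable def euclidDual {k : ℕ} (g : Fin k → ℝ) : (Fin k → ℝ) →L[ℝ] ℝ :=
  LinearMap.toContinuousLinearMap
    { toFun := fun w => ∑ l, g l * w l
      map_add' := fun x y => by simp [mul_add, Finset.sum_add_distrib]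
      map_smul' := fun c x => by
        simp [Finset.mul_sum, mul_comm, mul_left_comm] }

lemma hasDerivAt_maxsq (a : ℝ) : HasDerivAt (fun x : ℝ => (max x 0)^2) (2 * max a 0) a := by
  rcases lt_trichotomy a 0 with h | h | h
  · have he : (fun x : ℝ => (max x 0)^2) =ᶠ[nhds a] fun _ => 0 := by
      filter_upwards [eventually_lt_nhds h] with x hx
      simp [max_eq_right hx.le]
    rw [max_eq_right h.le, mul_zero]
    exact (hasDerivAt_const a (0:ℝ)).congr_of_eventuallyEq he
  · subst h
    rw [max_self, mul_zero]  -- max 0 0 = 0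
    rw [hasDerivAt_iff_tendsto_slope]
    apply squeeze_zero_norm (a := fun x : ℝ => |x|)
    · intro x
      rcases eq_or_ne x 0 with rfl | hx
      · simp [slope]
      · have h1 : slope (fun x : ℝ => (max x 0)^2) 0 x = (max x 0)^2 / x := by
          simp [slope_def_field]
        rw [h1, Real.norm_eq_abs, abs_div, abs_of_nonneg (sq_nonneg _)]
        have h2 : (max x 0)^2 ≤ |x| * |x| := by
          have : |max x 0| ≤ |x| := by
            rcases le_total x 0 with hx0 | hx0
            · simp [max_eq_right hx0]
            · simp [max_eq_left hx0, abs_of_nonneg hx0]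
          calc (max x 0)^2 = |max x 0| * |max x 0| := by rw [abs_mul_abs_self]; ring
            _ ≤ |x| * |x| := mul_le_mul this this (abs_nonneg _) (abs_nonneg _)
        rw [div_le_iff₀ (abs_pos.mpr hx)]
        exact h2
    · exact (continuous_abs.tendsto' 0 0 abs_zero).mono_left nhdsWithin_le_nhds
  · have he : (fun x : ℝ => (max x 0)^2) =ᶠ[nhds a] fun x => x^2 := by
      filter_upwards [eventually_gt_nhds h] with x hx
      simp [max_eq_left hx.le]
    rw [max_eq_left h.le]
    have := hasDerivAt_pow 2 a
    simpa using this.congr_of_eventuallyEq he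

lemma euclidDual_apply {k : ℕ} (g w : Fin k → ℝ) : euclidDual g w = ∑ l, g l * w l := rfl

lemma euclidDual_sub {k : ℕ} (g h : Fin k → ℝ) :
    euclidDual (g - h) = euclidDual g - euclidDual h := by
  ext w; simp [euclidDual_apply, sub_mul, Finset.sum_sub_distrib]

lemma euclidDual_smul {k : ℕ} (c : ℝ) (g : Fin k → ℝ) :
    euclidDual (c • g) = c • euclidDual g := by
  ext w; simp [euclidDual_apply, Finset.mul_sum, mul_assoc]

lemma euclidDual_sum {k m : ℕ} (g : Fin m → Fin k → ℝ) :
    euclidDual (∑ j, g j) = ∑ j, euclidDual (g j) := by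
  ext w
  simp only [euclidDual_apply, Finset.sum_apply, Finset.sum_mul,
    ContinuousLinearMap.coe_sum', Finset.sum_apply]
  exact Finset.sum_comm

lemma mulVec_sum' {k n m : ℕ} (W : Matrix (Fin k) (Fin n) ℝ) (f : Fin m → Fin n → ℝ) :
    W *ᵥ (∑ j, f j) = ∑ j, W *ᵥ f j := by
  ext l
  simp only [Matrix.mulVec, dotProduct, Finset.sum_apply, Finset.mul_sum]
  exact Finset.sum_comm

lemma tip_eq {k n : ℕ} (M : Matrix (Fin n) (Fin n) ℝ) (W : Matrix (Fin k) (Fin n) ℝ) :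
    tip M (Wᵀ * W) = ∑ l, ∑ x, ∑ p, W l p * W l x * M p x := by
  simp only [tip, Matrix.trace, Matrix.diag, Matrix.mul_apply, Matrix.transpose_apply,
    Finset.sum_mul]
  calc ∑ x : Fin n, ∑ p : Fin n, ∑ l : Fin k, W l p * W l x * M p x
      = ∑ x : Fin n, ∑ l : Fin k, ∑ p : Fin n, W l p * W l x * M p x :=
        Finset.sum_congr rfl fun x _ => Finset.sum_comm
    _ = ∑ l, ∑ x, ∑ p, W l p * W l x * M p x := Finset.sum_comm

noncomputable def Dij {k : ℕ} (c : Prop) [Decidable c] (l : Fin k) : (Fin k → ℝ) →L[ℝ] ℝ :=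
  if c then ContinuousLinearMap.proj l else 0

lemma key' {k n : ℕ} (M : Matrix (Fin n) (Fin n) ℝ) (hM : M.IsSymm)
    (V : Matrix (Fin k) (Fin n) ℝ) (i : Fin n) (u : Fin k → ℝ) :
    HasFDerivAt (fun u : Fin k → ℝ => tip M ((V.updateCol i u)ᵀ * V.updateCol i u))
      (euclidDual ((2:ℝ) • ((V.updateCol i u) *ᵥ fun l => M l i))) u := by
  have hcoord : ∀ (p : Fin n) (l : Fin k),
      HasFDerivAt (fun v : Fin k → ℝ => (V.updateCol i v) l p) (Dij (p = i) l) u := by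
    intro p l
    by_cases hp : p = i
    · simp only [Dij, hp, if_true, Matrix.updateCol_apply, if_pos rfl]
      exact (ContinuousLinearMap.proj (R := ℝ) (φ := fun _ : Fin k => ℝ) l).hasFDerivAt
    · simp only [Dij, hp, if_false, Matrix.updateCol_apply]
      exact hasFDerivAt_const _ _
  have hterm : ∀ (l : Fin k) (x p : Fin n), HasFDerivAt
      (fun v : Fin k → ℝ => (V.updateCol i v) l p * (V.updateCol i v) l x * M p x)
      (M p x • ((V.updateCol i u) l p • Dij (x = i) l
        + (V.updateCol i u) l x • Dij (p = i) l)) u := by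
    intro l x p
    exact ((hcoord p l).mul (hcoord x l)).mul_const (M p x)
  have hsum : HasFDerivAt
      (fun v : Fin k → ℝ => ∑ l, ∑ x, ∑ p,
        (V.updateCol i v) l p * (V.updateCol i v) l x * M p x)
      (∑ l, ∑ x, ∑ p, M p x • ((V.updateCol i u) l p • Dij (x = i) l
        + (V.updateCol i u) l x • Dij (p = i) l)) u :=
    HasFDerivAt.fun_sum fun l _ => HasFDerivAt.fun_sum fun x _ => HasFDerivAt.fun_sum fun p _ => hterm l x p
  have hfun : (fun v : Fin k → ℝ => tip M ((V.updateCol i v)ᵀ * V.updateCol i v))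
      = fun v => ∑ l, ∑ x, ∑ p, (V.updateCol i v) l p * (V.updateCol i v) l x * M p x :=
    funext fun v => tip_eq M _
  rw [hfun]
  convert hsum using 1
  ext w
  simp only [euclidDual_apply, ContinuousLinearMap.coe_sum', Finset.sum_apply,
    ContinuousLinearMap.add_apply, ContinuousLinearMap.coe_smul', Pi.smul_apply,
    ContinuousLinearMap.proj_apply, smul_eq_mul, Dij,
    apply_ite (fun φ : (Fin k → ℝ) →L[ℝ] ℝ => φ w), ContinuousLinearMap.zero_apply,
    mul_ite, mul_zero, Matrix.mulVec, dotProduct, Pi.smul_apply]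
  refine Finset.sum_congr rfl fun l _ => ?_
  simp only [mul_add, mul_ite, mul_zero, Finset.sum_add_distrib, Finset.sum_ite_eq',
    Finset.mem_univ, if_true, Finset.sum_ite_irrel, Finset.sum_const_zero]
  simp only [Finset.mul_sum, Finset.sum_mul]
  rw [← Finset.sum_add_distrib]
  refine Finset.sum_congr rfl fun q _ => ?_
  rw [hM.apply i q]
  ring

lemma hasFDerivAt_sq {k : ℕ} {f : (Fin k → ℝ) → ℝ} {f' : (Fin k → ℝ) →L[ℝ] ℝ} {u : Fin k → ℝ}
    (h : HasFDerivAt f f' u) :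
    HasFDerivAt (fun v => f v ^ 2) ((2 * f u) • f') u := by
  have h1 := h.mul h
  have h2 : (f * f) = fun v => f v ^ 2 := by funext v; rw [Pi.mul_apply]; ring
  rw [h2] at h1
  refine h1.congr_fderiv ?_
  module


/-- with all columns of `V` fixed except the `i`-th one, the map
`u ↦ L(V(u), yᵃ, yᵇ; μ)` (where `V(u)` is `V` with its `i`-th column replaced by `u`)
is differentiable at every `u ∈ ℝ^k`, with gradient
`2·V(u)·(C_{(i)} − Σⱼ [yᵃⱼ + μ(aⱼ − ⟨Aⱼ, V(u)ᵀV(u)⟩)]·(Aⱼ)_{(i)}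
  − Σⱼ max{yᵇⱼ + μ(bⱼ − ⟨Bⱼ, V(u)ᵀV(u)⟩), 0}·(Bⱼ)_{(i)})`. -/
theorem stmt3 {k n ma mb : ℕ}
    (C : Matrix (Fin n) (Fin n) ℝ) (hC : C.IsSymm)
    (A : Fin ma → Matrix (Fin n) (Fin n) ℝ) (hA : ∀ j, (A j).IsSymm)
    (B : Fin mb → Matrix (Fin n) (Fin n) ℝ) (hB : ∀ j, (B j).IsSymm)
    (a : Fin ma → ℝ) (b : Fin mb → ℝ)
    (μ : ℝ) (hμ : 0 < μ) (ya : Fin ma → ℝ) (yb : Fin mb → ℝ)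
    (V : Matrix (Fin k) (Fin n) ℝ) (i : Fin n) (u : Fin k → ℝ) :
    HasFDerivAt
      (fun u : Fin k → ℝ =>
        tip C ((V.updateCol i u)ᵀ * V.updateCol i u)
          + ∑ j, ya j * (a j - tip (A j) ((V.updateCol i u)ᵀ * V.updateCol i u))
          + (μ / 2) * ∑ j, (a j - tip (A j) ((V.updateCol i u)ᵀ * V.updateCol i u)) ^ 2
          + (1 / (2 * μ)) * ∑ j,
              (max (yb j + μ * (b j - tip (B j) ((V.updateCol i u)ᵀ * V.updateCol i u))) 0) ^ 2
          - (1 / (2 * μ)) * ∑ j, (yb j) ^ 2)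
      (euclidDual ((2 : ℝ) • ((V.updateCol i u) *ᵥ (fun l : Fin n =>
          C l i
            - ∑ j, (ya j + μ * (a j - tip (A j) ((V.updateCol i u)ᵀ * V.updateCol i u))) * A j l i
            - ∑ j, max (yb j + μ * (b j - tip (B j) ((V.updateCol i u)ᵀ * V.updateCol i u))) 0 * B j l i))))
      u := by
  set W := V.updateCol i u with hWdef
  -- derivative pieces
  have h0 := key' C hC V i u
  have hFA : ∀ j, _ := fun j => key' (A j) (hA j) V i u
  have hFB : ∀ j, _ := fun j => key' (B j) (hB j) V i u
  have h1 : HasFDerivAt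
      (fun v : Fin k → ℝ => ∑ j, ya j * (a j - tip (A j) ((V.updateCol i v)ᵀ * V.updateCol i v)))
      (∑ j, ya j • -(euclidDual ((2:ℝ) • (W *ᵥ fun l => A j l i)))) u :=
    HasFDerivAt.fun_sum fun j _ => ((hFA j).const_sub (a j)).const_mul (ya j)
  have h2 : HasFDerivAt
      (fun v : Fin k → ℝ => (μ/2) * ∑ j, (a j - tip (A j) ((V.updateCol i v)ᵀ * V.updateCol i v))^2)
      ((μ/2) • ∑ j, (2 * (a j - tip (A j) (Wᵀ * W))) • -(euclidDual ((2:ℝ) • (W *ᵥ fun l => A j l i)))) u :=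
    (HasFDerivAt.fun_sum fun j _ => hasFDerivAt_sq ((hFA j).const_sub (a j))).const_mul _
  have h3 : HasFDerivAt
      (fun v : Fin k → ℝ => (1/(2*μ)) * ∑ j,
        (max (yb j + μ * (b j - tip (B j) ((V.updateCol i v)ᵀ * V.updateCol i v))) 0)^2)
      ((1/(2*μ)) • ∑ j, (2 * max (yb j + μ * (b j - tip (B j) (Wᵀ * W))) 0) •
        (μ • -(euclidDual ((2:ℝ) • (W *ᵥ fun l => B j l i))))) u := by
    refine HasFDerivAt.const_mul ?_ _
    refine HasFDerivAt.fun_sum fun j _ => ?_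
    have hg : HasFDerivAt
        (fun v : Fin k → ℝ => yb j + μ * (b j - tip (B j) ((V.updateCol i v)ᵀ * V.updateCol i v)))
        (μ • -(euclidDual ((2:ℝ) • (W *ᵥ fun l => B j l i)))) u :=
      (((hFB j).const_sub (b j)).const_mul μ).const_add (yb j)
    exact (hasDerivAt_maxsq _).comp_hasFDerivAt u hg
  have htot := (((h0.add h1).add h2).add h3).sub_const ((1/(2*μ)) * ∑ j, (yb j)^2)
  refine htot.congr_fderiv (Eq.symm ?_)
  have hc : (fun l : Fin n =>
        C l i - ∑ j, (ya j + μ * (a j - tip (A j) (Wᵀ * W))) * A j l i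
          - ∑ j, max (yb j + μ * (b j - tip (B j) (Wᵀ * W))) 0 * B j l i)
      = (fun l => C l i)
        - (∑ j, (ya j + μ * (a j - tip (A j) (Wᵀ * W))) • fun l => A j l i)
        - (∑ j, (max (yb j + μ * (b j - tip (B j) (Wᵀ * W))) 0) • fun l => B j l i) := by
    funext l
    simp [Finset.sum_apply]
  rw [hc, mulVec_sub, mulVec_sub, mulVec_sum', mulVec_sum']
  simp only [mulVec_smul, smul_sub, Finset.smul_sum, smul_comm (2:ℝ)]
  rw [euclidDual_sub, euclidDual_sub, euclidDual_sum, euclidDual_sum]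
  simp only [euclidDual_smul]
  rw [← hWdef]
  have hA' : ∀ j : Fin ma,
      ya j • -((2:ℝ) • euclidDual (W *ᵥ fun l => A j l i))
        + (μ/2) • (2 * (a j - tip (A j) (Wᵀ * W))) • -((2:ℝ) • euclidDual (W *ᵥ fun l => A j l i))
      = -((ya j + μ * (a j - tip (A j) (Wᵀ * W))) • (2:ℝ) • euclidDual (W *ᵥ fun l => A j l i)) :=
    fun j => by module
  have hB' : ∀ j : Fin mb,
      (1/(2*μ)) • (2 * max (yb j + μ * (b j - tip (B j) (Wᵀ * W))) 0) •
          μ • -((2:ℝ) • euclidDual (W *ᵥ fun l => B j l i))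
      = -((max (yb j + μ * (b j - tip (B j) (Wᵀ * W))) 0) • (2:ℝ) • euclidDual (W *ᵥ fun l => B j l i)) := by
    intro j
    simp only [smul_neg, smul_smul, neg_inj]
    congr 1
    field_simp
  rw [add_assoc (2 • euclidDual (W *ᵥ fun l => C l i)), ← Finset.sum_add_distrib]
  simp only [hA', hB']
  rw [Finset.sum_neg_distrib, Finset.sum_neg_distrib]
  abel
end

section
/- For every μ > 0 and every t ≥ 0, set y = (2 + t, −2 − t). Then: (i) v₁ = 0 is a strict local maximizer of the function v₁ ↦ L(v₁, √(3/2), y; μ), i.e. there exists δ > 0 such that L(v₁, √(3/2), y; μ) < L(0, √(3/2), y; μ) for all v₁ with 0 < |v₁| < δ; and (ii) v₂ = √(3/2) is a global minimizer over ℝ of the function v₂ ↦ L(0, v₂, y; μ). In particular, a block coordinate update of either v₁ or v₂ starting from (v₁, v₂) = (0, √(3/2)) leaves the point unchanged, for every such y and every μ > 0. -/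
/-- The augmented Lagrangian of the two-block SDP of Section 5.5:
`L(v₁, v₂, y; μ) = v₁² + y₁(2 − v₁² − v₂²) + y₂(1 − v₂²)
  + (μ/2)(2 − v₁² − v₂²)² + (μ/2)(1 − v₂²)²`. -/
noncomputable def augLag55 (v₁ v₂ y₁ y₂ μ : ℝ) : ℝ :=
  v₁ ^ 2 + y₁ * (2 - v₁ ^ 2 - v₂ ^ 2) + y₂ * (1 - v₂ ^ 2)
    + (μ / 2) * (2 - v₁ ^ 2 - v₂ ^ 2) ^ 2 + (μ / 2) * (1 - v₂ ^ 2) ^ 2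

/-- for every `μ > 0` and `t ≥ 0`, with `y = (2 + t, −2 − t)`:
(i) `v₁ = 0` is a strict local maximizer of `v₁ ↦ L(v₁, √(3/2), y; μ)`, and
(ii) `v₂ = √(3/2)` is a global minimizer over `ℝ` of `v₂ ↦ L(0, v₂, y; μ)`.
Hence a block coordinate update of either variable leaves `(0, √(3/2))` unchanged. -/
theorem stmt9 (μ t : ℝ) (hμ : 0 < μ) (ht : 0 ≤ t) :
    (∃ δ > (0 : ℝ), ∀ v₁ : ℝ, 0 < |v₁| → |v₁| < δ →
      augLag55 v₁ (Real.sqrt (3 / 2)) (2 + t) (-2 - t) μ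
        < augLag55 0 (Real.sqrt (3 / 2)) (2 + t) (-2 - t) μ) ∧
    (∀ v₂ : ℝ,
      augLag55 0 (Real.sqrt (3 / 2)) (2 + t) (-2 - t) μ
        ≤ augLag55 0 v₂ (2 + t) (-2 - t) μ) := by
  have hs : Real.sqrt (3 / 2) ^ 2 = 3 / 2 := Real.sq_sqrt (by norm_num)
  constructor
  · refine ⟨1, one_pos, fun v₁ h0 h1 => ?_⟩
    have h2 : v₁ ^ 2 < 1 := by
      have := abs_nonneg v₁
      nlinarith [sq_abs v₁]
    have h3 : 0 < v₁ ^ 2 := by nlinarith [sq_abs v₁]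
    simp only [augLag55, hs]
    nlinarith [mul_pos hμ (mul_pos h3 (by linarith : (0:ℝ) < 1 - v₁ ^ 2)), mul_nonneg ht h3.le]
  · intro v₂
    simp only [augLag55, hs]
    nlinarith [sq_nonneg (v₂ ^ 2 - 3 / 2)]
end
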